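/- Let k ≥ 1 and λ a positive integer. Define the order-k Boole polynomials of the second kind B̂l_n^{(k)}(x|λ) by ∑_{n≥0} B̂l_n^{(k)}(x|λ) t^n/n! = ((1+t)^λ/(1+(1+t)^λ))^k (1+t)^x. Then for every m ≥ 0, (λ^m/2^k) E_m^{(k)}(k + x/λ) = ∑_{n=0}^{m} B̂l_n^{(k)}(x|λ) S₂(m,n). -/

import Mathlib

open Finset PowerSeries

/-- Stirling numbers of the second kind. -/
def stirling2 : ℕ → ℕ → ℕ
  | 0, 0 => 1
  | 0, _ + 1 => 0
  | _ + 1, 0 => 0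
  | n + 1, k + 1 => (k + 1) * stirling2 n (k + 1) + stirling2 n k

/-- Unsigned Stirling numbers of the first kind. -/
def stirling1 : ℕ → ℕ → ℕ
  | 0, 0 => 1
  | 0, _ + 1 => 0
  | _ + 1, 0 => 0
  | n + 1, k + 1 => n * stirling1 n (k + 1) + stirling1 n k

/-- Signed Stirling numbers of the first kind. -/
def s1 (n l : ℕ) : ℚ := (-1) ^ (n - l) * (stirling1 n l : ℚ)

/-- The exponential generating function `∑ a n * t^n / n!` as a power series over `ℚ`. -/
noncomputable def egf (a : ℕ → ℚ) : PowerSeries ℚ :=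
  PowerSeries.mk fun n => a n / (Nat.factorial n : ℚ)

/-- The binomial series `(1+t)^x = ∑ (x)_n t^n / n!` for `x : ℚ`. -/
noncomputable def onePlusTPow (x : ℚ) : PowerSeries ℚ :=
  egf fun n => ∏ i ∈ Finset.range n, (x - i)

/-- `e^{xt}` as a power series over `ℚ`. -/
noncomputable def expXT (x : ℚ) : PowerSeries ℚ := egf fun n => x ^ n

lemma stirling2_eq_zero : ∀ {m n : ℕ}, m < n → stirling2 m n = 0
  | 0, _ + 1, _ => rfl
  | m + 1, n + 1, h => by
      have h1 : m < n + 1 := by omega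
      have h2 : m < n := by omega
      simp [stirling2, stirling2_eq_zero h1, stirling2_eq_zero h2]

lemma dexp : d⁄dX ℚ (exp ℚ) = exp ℚ := by
  ext n
  rw [PowerSeries.coeff_derivative, PowerSeries.coeff_exp, PowerSeries.coeff_exp]
  simp only [Algebra.algebraMap_self, RingHom.id_apply]
  have h1 : ((Nat.factorial (n+1) : ℕ) : ℚ) = (Nat.factorial n : ℚ) * ((n : ℚ) + 1) := by
    rw [Nat.factorial_succ]; push_cast; ring
  have h2 : (Nat.factorial n : ℚ) ≠ 0 := by exact_mod_cast Nat.factorial_ne_zero n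
  rw [h1]
  field_simp

lemma coeff_E_pow : ∀ (n m : ℕ), (coeff m) ((exp ℚ - 1) ^ n) =
    (Nat.factorial n : ℚ) * (stirling2 m n : ℚ) / (Nat.factorial m : ℚ)
  | 0, m => by
      cases m with
      | zero => simp [stirling2]
      | succ m => simp [stirling2, PowerSeries.coeff_one]
  | n + 1, m => by
      induction m with
      | zero =>
          rw [PowerSeries.coeff_zero_eq_constantCoeff, map_pow]
          simp [stirling2, PowerSeries.constantCoeff_exp]
      | succ m ih =>
          have hD : d⁄dX ℚ ((exp ℚ - 1) ^ (n + 1)) =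
              (n + 1 : ℚ) • ((exp ℚ - 1) ^ (n + 1) + (exp ℚ - 1) ^ n) := by
            rw [Derivation.leibniz_pow]
            have hde : d⁄dX ℚ (exp ℚ - 1) = exp ℚ := by
              rw [map_sub, Derivation.map_one_eq_zero, dexp, sub_zero]
            rw [hde, Nat.add_sub_cancel, smul_eq_mul]
            have hmul : (exp ℚ - 1) ^ n * exp ℚ = (exp ℚ - 1) ^ (n + 1) + (exp ℚ - 1) ^ n := by
              ring
            rw [hmul, ← Nat.cast_smul_eq_nsmul ℚ]
            norm_num
          have hrec : ((m : ℚ) + 1) * (coeff (m + 1)) ((exp ℚ - 1) ^ (n + 1)) =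
              ((n : ℚ) + 1) * ((coeff m) ((exp ℚ - 1) ^ (n + 1)) +
                (coeff m) ((exp ℚ - 1) ^ n)) := by
            have h0 := congrArg (coeff m) hD
            rw [PowerSeries.coeff_derivative, map_smul, map_add, smul_eq_mul] at h0
            push_cast at h0 ⊢
            linarith [h0]
          have hs : (stirling2 (m + 1) (n + 1) : ℚ) =
              ((n : ℚ) + 1) * (stirling2 m (n + 1) : ℚ) + (stirling2 m n : ℚ) := by
            show ((((n+1) * stirling2 m (n + 1) + stirling2 m n : ℕ)) : ℚ) = _
            push_cast
            ring
          have hm1 : ((m : ℚ) + 1) ≠ 0 := by positivity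
          have hmf : ((Nat.factorial m : ℚ)) ≠ 0 := by
            exact_mod_cast Nat.factorial_ne_zero m
          rw [ih, coeff_E_pow n m] at hrec
          have : (coeff (m + 1)) ((exp ℚ - 1) ^ (n + 1)) =
              ((n : ℚ) + 1) * ((Nat.factorial (n+1) : ℚ) * (stirling2 m (n+1) : ℚ) / (Nat.factorial m : ℚ) +
                (Nat.factorial n : ℚ) * (stirling2 m n : ℚ) / (Nat.factorial m : ℚ)) / ((m:ℚ)+1) := by
            field_simp at hrec ⊢
            linarith [hrec]
          rw [this, hs, Nat.factorial_succ, Nat.factorial_succ]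
          push_cast
          field_simp

lemma coeff_E_pow_zero {n m : ℕ} (h : m < n) : (coeff m) ((exp ℚ - 1) ^ n) = 0 := by
  rw [coeff_E_pow, stirling2_eq_zero h]
  simp

noncomputable def Phi (f : PowerSeries ℚ) : PowerSeries ℚ :=
  PowerSeries.mk fun m => ∑ n ∈ range (m + 1), coeff n f * coeff m ((exp ℚ - 1) ^ n)

lemma coeff_Phi (f : PowerSeries ℚ) {m N : ℕ} (h : m < N) :
    coeff m (Phi f) = ∑ n ∈ range N, coeff n f * coeff m ((exp ℚ - 1) ^ n) := by
  rw [Phi, coeff_mk]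
  apply Finset.sum_subset
  · intro a ha
    simp only [mem_range] at ha ⊢
    omega
  · intro a _ ha
    simp only [mem_range, not_lt] at ha
    rw [coeff_E_pow_zero (by omega)]
    ring

lemma Phi_add (f g : PowerSeries ℚ) : Phi (f + g) = Phi f + Phi g := by
  ext m
  simp only [Phi, coeff_mk, map_add, ← Finset.sum_add_distrib]
  apply Finset.sum_congr rfl
  intros; ring

lemma Phi_C_mul (a : ℚ) (f : PowerSeries ℚ) : Phi (C a * f) = C a * Phi f := by
  ext m
  simp only [Phi, coeff_mk, PowerSeries.coeff_C_mul, Finset.mul_sum]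
  apply Finset.sum_congr rfl
  intros; ring

lemma coeff_Phi_eq_coeff_sum (f : PowerSeries ℚ) {j m : ℕ} (hj : j ≤ m) :
    coeff j (Phi f) =
      coeff j (∑ n ∈ range (m + 1), C (coeff n f) * (exp ℚ - 1) ^ n) := by
  rw [coeff_Phi f (by omega : j < m + 1), map_sum]
  apply Finset.sum_congr rfl
  intro n _
  rw [PowerSeries.coeff_C_mul]

lemma coeff_mul_right_congr {f f' g : PowerSeries ℚ} {m : ℕ}
    (h : ∀ j ≤ m, coeff j f = coeff j f') :
    coeff m (g * f) = coeff m (g * f') := by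
  rw [PowerSeries.coeff_mul, PowerSeries.coeff_mul]
  apply Finset.sum_congr rfl
  intro p hp
  rw [Finset.HasAntidiagonal.mem_antidiagonal] at hp
  rw [h p.2 (by omega)]

lemma Phi_X_mul (f : PowerSeries ℚ) : Phi (X * f) = (exp ℚ - 1) * Phi f := by
  ext m
  have hR : coeff m ((exp ℚ - 1) * Phi f) =
      ∑ n ∈ range (m + 1), coeff n f * coeff m ((exp ℚ - 1) ^ (n + 1)) := by
    rw [coeff_mul_right_congr (fun j hj => coeff_Phi_eq_coeff_sum f hj)]
    rw [Finset.mul_sum, map_sum]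
    apply Finset.sum_congr rfl
    intro n _
    have : (exp ℚ - 1) * (C (coeff n f) * (exp ℚ - 1) ^ n) =
        C (coeff n f) * (exp ℚ - 1) ^ (n + 1) := by ring
    rw [this, PowerSeries.coeff_C_mul]
  rw [hR, Phi, coeff_mk]
  rw [Finset.sum_range_succ' _ m]
  simp only [PowerSeries.coeff_zero_X_mul, PowerSeries.coeff_succ_X_mul, zero_mul, add_zero]
  rw [Finset.sum_range_succ]
  rw [coeff_E_pow_zero (by omega : m < m + 1)]
  simp

lemma Phi_poly_mul (p : Polynomial ℚ) (f : PowerSeries ℚ) :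
    Phi ((p : PowerSeries ℚ) * f) = Polynomial.aeval (exp ℚ - 1) p * Phi f := by
  induction p using Polynomial.induction_on with
  | C a =>
      rw [Polynomial.coe_C, Phi_C_mul, Polynomial.aeval_C]
      congr 1
  | add p q hp hq =>
      rw [Polynomial.coe_add, add_mul, Phi_add, hp, hq, map_add, add_mul]
  | monomial n a ih =>
      have h1 : ((Polynomial.C a * Polynomial.X ^ (n + 1) : Polynomial ℚ) : PowerSeries ℚ) * f =
          X * (((Polynomial.C a * Polynomial.X ^ n : Polynomial ℚ) : PowerSeries ℚ) * f) := by
        push_cast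
        ring
      rw [h1, Phi_X_mul, ih, map_mul, map_mul, map_pow, map_pow, Polynomial.aeval_X]
      ring

lemma sum_stirling2_falling : ∀ (m : ℕ) (y : ℚ),
    ∑ n ∈ range (m + 1), (stirling2 m n : ℚ) * ∏ i ∈ range n, (y - (i : ℚ)) = y ^ m
  | 0, y => by simp [stirling2]
  | m + 1, y => by
    have ih := sum_stirling2_falling m y
    rw [Finset.sum_range_succ']
    have h0 : ((stirling2 (m + 1) 0 : ℕ) : ℚ) * ∏ i ∈ range 0, (y - (i : ℚ)) = 0 := by
      simp [stirling2]
    rw [h0, add_zero]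
    have hterm : ∀ n ∈ range (m + 1),
        ((stirling2 (m + 1) (n + 1) : ℕ) : ℚ) * ∏ i ∈ range (n + 1), (y - (i : ℚ)) =
          (((n : ℚ) + 1) * (stirling2 m (n + 1) : ℚ) * ∏ i ∈ range (n + 1), (y - (i : ℚ)))
          + ((stirling2 m n : ℚ) * (∏ i ∈ range n, (y - (i : ℚ))) * (y - (n : ℚ))) := by
      intro n _
      have hs : ((stirling2 (m + 1) (n + 1) : ℕ) : ℚ) =
          ((n : ℚ) + 1) * (stirling2 m (n + 1) : ℚ) + (stirling2 m n : ℚ) := by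
        show (((n + 1) * stirling2 m (n + 1) + stirling2 m n : ℕ) : ℚ) = _
        push_cast; ring
      rw [hs, Finset.prod_range_succ]
      ring
    rw [Finset.sum_congr rfl hterm, Finset.sum_add_distrib]
    have hkey : ∑ n ∈ range (m + 1),
        (((n : ℚ) + 1) * (stirling2 m (n + 1) : ℚ) * ∏ i ∈ range (n + 1), (y - (i : ℚ)))
        = ∑ n ∈ range (m + 1), ((n : ℚ) * (stirling2 m n : ℚ) * ∏ i ∈ range n, (y - (i : ℚ))) := by
      rw [Finset.sum_range_succ]
      rw [Finset.sum_range_succ' (fun n => ((n : ℚ) * (stirling2 m n : ℚ) * ∏ i ∈ range n, (y - (i : ℚ)))) m]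
      rw [stirling2_eq_zero (by omega : m < m + 1)]
      push_cast
      simp
    rw [hkey]
    have hcomb : ∑ n ∈ range (m + 1), ((n : ℚ) * (stirling2 m n : ℚ) * ∏ i ∈ range n, (y - (i : ℚ)))
        + ∑ n ∈ range (m + 1), ((stirling2 m n : ℚ) * (∏ i ∈ range n, (y - (i : ℚ))) * (y - (n : ℚ)))
        = y * ∑ n ∈ range (m + 1), ((stirling2 m n : ℚ) * ∏ i ∈ range n, (y - (i : ℚ))) := by
      rw [← Finset.sum_add_distrib, Finset.mul_sum]
      apply Finset.sum_congr rfl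
      intros; ring
    rw [hcomb, ih]
    ring

lemma Phi_onePlusTPow (x : ℚ) : Phi (onePlusTPow x) = expXT x := by
  ext m
  rw [Phi, coeff_mk, expXT, egf, coeff_mk]
  have hstep : ∀ n ∈ range (m + 1),
      coeff n (onePlusTPow x) * coeff m ((exp ℚ - 1) ^ n) =
        (stirling2 m n : ℚ) * (∏ i ∈ range n, (x - (i : ℚ))) / (Nat.factorial m : ℚ) := by
    intro n _
    rw [onePlusTPow, egf, coeff_mk, coeff_E_pow]
    have hn : (Nat.factorial n : ℚ) ≠ 0 := by exact_mod_cast Nat.factorial_ne_zero n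
    field_simp
  rw [Finset.sum_congr rfl hstep, ← Finset.sum_div, sum_stirling2_falling]

lemma coeff_Phi_egf (a : ℕ → ℚ) (m : ℕ) :
    coeff m (Phi (egf a)) =
      (∑ n ∈ range (m + 1), a n * (stirling2 m n : ℚ)) / (Nat.factorial m : ℚ) := by
  rw [Phi, coeff_mk, Finset.sum_div]
  apply Finset.sum_congr rfl
  intro n _
  rw [egf, coeff_mk, coeff_E_pow]
  have hn : (Nat.factorial n : ℚ) ≠ 0 := by exact_mod_cast Nat.factorial_ne_zero n
  field_simp

lemma expXT_eq (y : ℚ) : expXT y = rescale y (exp ℚ) := by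
  ext n
  rw [expXT, egf, coeff_mk, coeff_rescale, PowerSeries.coeff_exp]
  simp only [Algebra.algebraMap_self, RingHom.id_apply]
  rw [one_div, div_eq_mul_inv]

lemma rescale_egf (a : ℕ → ℚ) (c : ℚ) :
    rescale c (egf a) = egf fun n => c ^ n * a n := by
  rw [egf, rescale_mk, egf]
  ext n
  rw [coeff_mk, coeff_mk]
  ring

theorem boole2nd_order_k_stirling2_eq_euler (k L : ℕ) (hk : 1 ≤ k) (hL : 0 < L) (x : ℚ)
    (Bhk : ℕ → ℚ) (Ek : ℕ → ℚ → ℚ)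
    (hBhk : egf Bhk * (1 + (1 + PowerSeries.X) ^ L) ^ k =
      (1 + PowerSeries.X) ^ (L * k) * onePlusTPow x)
    (hEk : ∀ y : ℚ, egf (fun m => Ek m y) * (PowerSeries.exp ℚ + 1) ^ k = 2 ^ k * expXT y)
    (m : ℕ) :
    ((L : ℚ) ^ m / 2 ^ k) * Ek m ((k : ℚ) + x / L) =
      ∑ n ∈ Finset.range (m + 1), Bhk n * (stirling2 m n : ℚ) := by
  have hLQ : (L : ℚ) ≠ 0 := by positivity
  set y : ℚ := (k : ℚ) + x / L with hy
  -- Step 1 : apply Phi to hBhk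
  have hcoe1 : (((1 + (1 + Polynomial.X) ^ L) ^ k : Polynomial ℚ) : PowerSeries ℚ) =
      (1 + (1 + PowerSeries.X) ^ L) ^ k := by
    simp [Polynomial.coe_pow, Polynomial.coe_add, Polynomial.coe_one, Polynomial.coe_X]
  have hcoe2 : ((((1 + Polynomial.X) ^ (L * k)) : Polynomial ℚ) : PowerSeries ℚ) =
      (1 + PowerSeries.X) ^ (L * k) := by
    simp [Polynomial.coe_pow, Polynomial.coe_add, Polynomial.coe_one, Polynomial.coe_X]
  have hone : (1 : PowerSeries ℚ) + (exp ℚ - 1) = exp ℚ := by ring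
  have haev1 : Polynomial.aeval (exp ℚ - 1) ((1 + (1 + Polynomial.X) ^ L) ^ k : Polynomial ℚ) =
      (1 + exp ℚ ^ L) ^ k := by
    rw [map_pow, map_add, map_one, map_pow, map_add, map_one, Polynomial.aeval_X, hone]
  have haev2 : Polynomial.aeval (exp ℚ - 1) (((1 + Polynomial.X) ^ (L * k)) : Polynomial ℚ) =
      exp ℚ ^ (L * k) := by
    rw [map_pow, map_add, map_one, Polynomial.aeval_X, hone]
  have step1 : Phi (egf Bhk) * (1 + exp ℚ ^ L) ^ k = exp ℚ ^ (L * k) * expXT x := by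
    have h := congrArg Phi hBhk
    rw [mul_comm (egf Bhk), ← hcoe1, ← hcoe2, Phi_poly_mul, Phi_poly_mul, Phi_onePlusTPow,
      haev1, haev2] at h
    rw [mul_comm (Phi (egf Bhk))]
    exact h
  -- Step 2 : rewrite RHS as a rescaled exponential
  have step2 : exp ℚ ^ (L * k) * expXT x = rescale ((L : ℚ) * k + x) (exp ℚ) := by
    rw [exp_pow_eq_rescale_exp, expXT_eq, exp_mul_exp_eq_exp_add]
    norm_num
  -- Step 3 : rescale hEk
  have step3 : egf (fun n => (L : ℚ) ^ n * Ek n y) * (1 + exp ℚ ^ L) ^ k =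
      2 ^ k * rescale ((L : ℚ) * k + x) (exp ℚ) := by
    have h := congrArg (rescale (L : ℚ)) (hEk y)
    rw [map_mul, map_pow, map_add, map_mul, map_pow] at h
    rw [rescale_egf, ← exp_pow_eq_rescale_exp, map_one] at h
    rw [expXT_eq, rescale_rescale] at h
    have h2 : (rescale (L : ℚ)) (2 : PowerSeries ℚ) = 2 := by
      rw [map_ofNat]
    have hyL : y * (L : ℚ) = (L : ℚ) * k + x := by
      rw [hy]; field_simp
    rw [h2, hyL] at h
    rw [add_comm (1 : PowerSeries ℚ)]
    exact h
  -- Step 4 : cancel the unit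
  have hU : ((1 : PowerSeries ℚ) + exp ℚ ^ L) ^ k ≠ 0 := by
    intro h
    have := congrArg (constantCoeff) h
    rw [map_pow, map_add, map_one, map_pow, PowerSeries.constantCoeff_exp] at this
    norm_num at this
  have key : egf (fun n => (L : ℚ) ^ n * Ek n y) = 2 ^ k * Phi (egf Bhk) := by
    apply mul_right_cancel₀ hU
    rw [step3, mul_assoc, step1, step2]
  -- Step 5 : extract coefficient m
  have hc2 : (coeff m) ((2 : PowerSeries ℚ) ^ k * Phi (egf Bhk)) =
      2 ^ k * (coeff m) (Phi (egf Bhk)) := by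
    have h2C : (2 : PowerSeries ℚ) ^ k = C (2 ^ k) := by rw [map_pow, map_ofNat]
    rw [h2C, PowerSeries.coeff_C_mul]
  have hc := congrArg (coeff m) key
  rw [egf, coeff_mk, hc2, coeff_Phi_egf] at hc
  have hm : (Nat.factorial m : ℚ) ≠ 0 := by exact_mod_cast Nat.factorial_ne_zero m
  have h2 : (2 : ℚ) ^ k ≠ 0 := by positivity
  field_simp at hc ⊢
  linear_combination hc
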